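/- arXiv:1210.8439 — 4 statements merged into one kernel-verified Lean document; each statement's English description precedes it below -/
import Mathlib

section
/- Let G = (V, E) be a finite simple undirected graph, and let M ⊆ V be the set of 'marked' vertices, where a vertex u is marked if it has a neighbor v with (deg(v), ID(v)) > (deg(u), ID(u)) in lexicographic order, for an injective function ID : V → ℕ. Then the vertex maximizing (deg, ID) is unmarked, no two unmarked vertices are adjacent, and the number of marked vertices with at least one neighbor is at least half the number of non-isolated vertices. -/
open scoped Classical

/-- A vertex `u` is *marked* if it has a neighbor `v` whose pair `(deg v, ID v)`
is lexicographically larger than `(deg u, ID u)`. -/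
def isMarked {V : Type*} [Fintype V] (G : SimpleGraph V) (ID : V → ℕ) (u : V) : Prop :=
  ∃ v, G.Adj u v ∧
    toLex (G.degree u, ID u) < toLex (G.degree v, ID v)

section Aux

variable {V : Type*} [Fintype V] [DecidableEq V]
  (G : SimpleGraph V) [DecidableRel G.Adj] (ID : V → ℕ)

lemma degree_congr (v : V) (i1 i2 : Fintype (G.neighborSet v)) :
    @SimpleGraph.degree V G v i1 = @SimpleGraph.degree V G v i2 := by
  congr 1
  exact Subsingleton.elim _ _

lemma isMarked_iff (u : V) :
    isMarked G ID u ↔ ∃ v, G.Adj u v ∧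
      toLex (G.degree u, ID u) < toLex (G.degree v, ID v) := by
  unfold isMarked
  constructor <;> rintro ⟨v, h1, h2⟩ <;> refine ⟨v, h1, ?_⟩ <;>
    · convert h2 using 4 <;> first | rfl | exact degree_congr G _ _ _

lemma unmarked_neighbor_lt (hID : Function.Injective ID) {u v : V}
    (hu : ¬ isMarked G ID u) (h : G.Adj u v) :
    toLex (G.degree v, ID v) < toLex (G.degree u, ID u) := by
  rw [isMarked_iff] at hu
  have hle : toLex (G.degree v, ID v) ≤ toLex (G.degree u, ID u) := by
    by_contra hlt
    exact hu ⟨v, h, not_le.mp hlt⟩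
  refine hle.lt_of_ne ?_
  intro he
  have hpe : (G.degree v, ID v) = (G.degree u, ID u) := toLex_inj.mp he
  have : v = u := hID (by simpa using congrArg Prod.snd hpe)
  exact G.ne_of_adj h this.symm

lemma unmarked_neighbor_deg (hID : Function.Injective ID) {u v : V}
    (hu : ¬ isMarked G ID u) (h : G.Adj u v) : G.degree v ≤ G.degree u := by
  have := unmarked_neighbor_lt G ID hID hu h
  rcases Prod.Lex.lt_iff.mp this with h1 | ⟨h1, _⟩
  · exact h1.le
  · exact h1.le

lemma unmarked_card_le (hID : Function.Injective ID) :
    (Finset.univ.filter (fun u : V => ¬ isMarked G ID u ∧ 0 < G.degree u)).card ≤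
    (Finset.univ.filter (fun u : V => isMarked G ID u ∧ 0 < G.degree u)).card := by
  set U := Finset.univ.filter (fun u : V => ¬ isMarked G ID u ∧ 0 < G.degree u) with hU
  set M := Finset.univ.filter (fun u : V => isMarked G ID u ∧ 0 < G.degree u) with hM
  have hUmem : ∀ u, u ∈ U ↔ ¬ isMarked G ID u ∧ 0 < G.degree u := by
    intro u; simp [hU]
  have hMmem : ∀ u, u ∈ M ↔ isMarked G ID u ∧ 0 < G.degree u := by
    intro u; simp [hM]
  -- neighbors of unmarked vertices are in M
  have hnbr : ∀ u ∈ U, ∀ v, G.Adj u v → v ∈ M := by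
    intro u hu v hadj
    rw [hUmem] at hu
    rw [hMmem]
    refine ⟨(isMarked_iff G ID v).mpr ⟨u, hadj.symm, unmarked_neighbor_lt G ID hID hu.1 hadj⟩, ?_⟩
    rw [← SimpleGraph.card_neighborFinset_eq_degree]
    exact Finset.card_pos.mpr ⟨u, by simp [hadj.symm]⟩
  have key : (U.card : ℚ) ≤ (M.card : ℚ) := by
    have step1 : (U.card : ℚ) =
        ∑ u ∈ U, ∑ v ∈ M, (if G.Adj u v then (1 : ℚ) / G.degree u else 0) := by
      rw [Finset.card_eq_sum_ones, Nat.cast_sum]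
      refine Finset.sum_congr rfl ?_
      intro u hu
      have hdeg : 0 < G.degree u := ((hUmem u).mp hu).2
      have : M.filter (fun v => G.Adj u v) = G.neighborFinset u := by
        ext v
        simp only [Finset.mem_filter, SimpleGraph.mem_neighborFinset]
        exact ⟨fun h => h.2, fun h => ⟨hnbr u hu v h, h⟩⟩
      rw [← Finset.sum_filter, this, Finset.sum_const,
        SimpleGraph.card_neighborFinset_eq_degree]
      simp only [Nat.cast_one, nsmul_eq_mul]
      field_simp
    have step2 : ∀ v ∈ M,
        (∑ u ∈ U, (if G.Adj u v then (1 : ℚ) / G.degree u else 0)) ≤ 1 := by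
      intro v hv
      have hdv : 0 < G.degree v := ((hMmem v).mp hv).2
      have hb : ∀ u ∈ U, (if G.Adj u v then (1 : ℚ) / G.degree u else 0) ≤
          (if G.Adj u v then (1 : ℚ) / G.degree v else 0) := by
        intro u hu
        by_cases h : G.Adj u v
        · simp only [h, if_true]
          apply one_div_le_one_div_of_le
          · exact_mod_cast hdv
          · exact_mod_cast unmarked_neighbor_deg G ID hID ((hUmem u).mp hu).1 h
        · simp [h]
      refine le_trans (Finset.sum_le_sum hb) ?_
      rw [← Finset.sum_filter, Finset.sum_const, nsmul_eq_mul]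
      have hsub : U.filter (fun u => G.Adj u v) ⊆ G.neighborFinset v := by
        intro u hu
        simp only [Finset.mem_filter] at hu
        simp [hu.2.symm]
      have hcard : ((U.filter (fun u => G.Adj u v)).card : ℚ) ≤ G.degree v := by
        exact_mod_cast (Finset.card_le_card hsub).trans_eq
          (SimpleGraph.card_neighborFinset_eq_degree G v)
      calc ((U.filter (fun u => G.Adj u v)).card : ℚ) * (1 / G.degree v)
          ≤ (G.degree v : ℚ) * (1 / G.degree v) := by
            apply mul_le_mul_of_nonneg_right hcard
            positivity
        _ = 1 := by field_simp
    calc (U.card : ℚ) = ∑ u ∈ U, ∑ v ∈ M, (if G.Adj u v then (1 : ℚ) / G.degree u else 0) :=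
          step1
      _ = ∑ v ∈ M, ∑ u ∈ U, (if G.Adj u v then (1 : ℚ) / G.degree u else 0) :=
          Finset.sum_comm
      _ ≤ ∑ v ∈ M, 1 := Finset.sum_le_sum step2
      _ = (M.card : ℚ) := by simp
  exact_mod_cast key

end Aux

theorem elimination_basic {V : Type*} [Fintype V] [DecidableEq V]
    (G : SimpleGraph V) [DecidableRel G.Adj] (ID : V → ℕ) (hID : Function.Injective ID) :
    (∀ u : V, (∀ w : V, toLex (G.degree w, ID w) ≤ toLex (G.degree u, ID u)) →
        ¬ isMarked G ID u) ∧
    (∀ u v : V, ¬ isMarked G ID u → ¬ isMarked G ID v → ¬ G.Adj u v) ∧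
    (Finset.univ.filter (fun u : V => 0 < G.degree u)).card ≤
      2 * (Finset.univ.filter (fun u : V => isMarked G ID u ∧ 0 < G.degree u)).card := by
  refine ⟨?_, ?_, ?_⟩
  · intro u hmax hm
    rw [isMarked_iff] at hm
    obtain ⟨v, _, hlt⟩ := hm
    exact absurd (hmax v) (not_le.mpr hlt)
  · intro u v hu hv hadj
    have h1 := unmarked_neighbor_lt G ID hID hu hadj
    have h2 := unmarked_neighbor_lt G ID hID hv hadj.symm
    exact absurd (h1.trans h2) (lt_irrefl _)
  · have hsplit :
        ((Finset.univ.filter (fun u : V => 0 < G.degree u)).filter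
            (fun u => isMarked G ID u)).card +
        ((Finset.univ.filter (fun u : V => 0 < G.degree u)).filter
            (fun u => ¬ isMarked G ID u)).card =
        (Finset.univ.filter (fun u : V => 0 < G.degree u)).card :=
      Finset.card_filter_add_card_filter_not _
    have e1 : (Finset.univ.filter (fun u : V => 0 < G.degree u)).filter
        (fun u => isMarked G ID u) =
        Finset.univ.filter (fun u : V => isMarked G ID u ∧ 0 < G.degree u) := by
      rw [Finset.filter_filter]
      apply Finset.filter_congr
      intro x _
      tauto
    have e2 : (Finset.univ.filter (fun u : V => 0 < G.degree u)).filter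
        (fun u => ¬ isMarked G ID u) =
        Finset.univ.filter (fun u : V => ¬ isMarked G ID u ∧ 0 < G.degree u) := by
      rw [Finset.filter_filter]
      apply Finset.filter_congr
      intro x _
      tauto
    rw [e1, e2] at hsplit
    have := unmarked_card_le G ID hID
    omega
end

section
/- Let G be a finite simple graph with no isolated vertices, and let U be its set of unmarked vertices (vertices u such that no neighbor v has (deg(v),ID(v)) > (deg(u),ID(u)) lexicographically, for an injective ID). Redistribute a charge of 1 from each u ∈ U equally among its deg(u) neighbors. Then every marked vertex receives total charge at most 1, and consequently |U| ≤ |V \ U|. -/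
open scoped Classical

/-- Charge redistribution: each unmarked vertex sends charge `1/deg u` to each of its
neighbors; every marked vertex receives total charge at most `1`, hence
`|U| ≤ |V \ U|` where `U` is the set of unmarked vertices. -/
theorem charge_argument {V : Type*} [Fintype V] [DecidableEq V]
    (G : SimpleGraph V) [DecidableRel G.Adj] (ID : V → ℕ)
    (hID : Function.Injective ID) (hNoIso : ∀ v : V, 0 < G.degree v) :
    (∀ v : V, isMarked G ID v →
      (∑ u ∈ (G.neighborFinset v).filter (fun u => ¬ isMarked G ID u),
        (1 : ℝ) / G.degree u) ≤ 1) ∧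
    (Finset.univ.filter (fun u : V => ¬ isMarked G ID u)).card ≤
      (Finset.univ \ Finset.univ.filter (fun u : V => ¬ isMarked G ID u)).card := by
  -- key lex comparison for unmarked vertices
  have key : ∀ u v : V, ¬ isMarked G ID u → G.Adj u v →
      toLex (G.degree v, ID v) < toLex (G.degree u, ID u) := by
    intro u v hu hadj
    rcases lt_trichotomy (toLex (G.degree u, ID u)) (toLex (G.degree v, ID v)) with h | h | h
    · exact absurd ⟨v, hadj, by convert h; rfl⟩ hu
    · exfalso
      have h2 : (G.degree u, ID u) = (G.degree v, ID v) := toLex.injective h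
      exact hadj.ne (hID (congrArg Prod.snd h2))
    · exact h
  have degle : ∀ u v : V, ¬ isMarked G ID u → G.Adj u v → G.degree v ≤ G.degree u := by
    intro u v hu hadj
    have h := key u v hu hadj
    rw [Prod.Lex.lt_iff] at h
    rcases h with h | ⟨h, _⟩
    · exact h.le
    · exact h.le
  have nbMarked : ∀ u v : V, ¬ isMarked G ID u → G.Adj u v → isMarked G ID v :=
    fun u v hu hadj => ⟨u, hadj.symm, by convert key u v hu hadj⟩
  have part1 : ∀ v : V, isMarked G ID v →
      (∑ u ∈ (G.neighborFinset v).filter (fun u => ¬ isMarked G ID u),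
        (1 : ℝ) / G.degree u) ≤ 1 := by
    intro v _
    set S := (G.neighborFinset v).filter (fun u => ¬ isMarked G ID u) with hS
    have hdvpos : (0 : ℝ) < G.degree v := by exact_mod_cast hNoIso v
    have h1 : ∀ u ∈ S, (1 : ℝ) / G.degree u ≤ 1 / G.degree v := by
      intro u hu
      rw [hS, Finset.mem_filter, SimpleGraph.mem_neighborFinset] at hu
      have hdle : G.degree v ≤ G.degree u := degle u v hu.2 hu.1.symm
      exact one_div_le_one_div_of_le hdvpos (by exact_mod_cast hdle)
    calc ∑ u ∈ S, (1 : ℝ) / G.degree u ≤ ∑ _u ∈ S, (1 : ℝ) / G.degree v :=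
          Finset.sum_le_sum h1
      _ = (S.card : ℝ) * (1 / G.degree v) := by rw [Finset.sum_const, nsmul_eq_mul]
      _ ≤ (G.degree v : ℝ) * (1 / G.degree v) := by
          apply mul_le_mul_of_nonneg_right _ (by positivity)
          have : S.card ≤ (G.neighborFinset v).card :=
            Finset.card_le_card (Finset.filter_subset _ _)
          rw [G.card_neighborFinset_eq_degree v] at this
          exact_mod_cast this
      _ = 1 := by field_simp
  refine ⟨part1, ?_⟩
  set U := Finset.univ.filter (fun u : V => ¬ isMarked G ID u) with hU
  set M := Finset.univ \ U with hM
  have hMmem : ∀ v : V, v ∈ M ↔ isMarked G ID v := by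
    intro v; simp [hM, hU]
  -- double counting over reals
  have hcount : (U.card : ℝ) = ∑ v ∈ M, ∑ u ∈ U, (if G.Adj u v then (1 : ℝ) / G.degree u else 0) := by
    rw [Finset.sum_comm]
    rw [show (U.card : ℝ) = ∑ u ∈ U, (1 : ℝ) by simp]
    apply Finset.sum_congr rfl
    intro u hu
    rw [hU, Finset.mem_filter] at hu
    have hnb : ∀ v, G.Adj u v → v ∈ M := fun v h => (hMmem v).2 (nbMarked u v hu.2 h)
    have : ∑ v ∈ M, (if G.Adj u v then (1 : ℝ) / G.degree u else 0)
        = ∑ v ∈ G.neighborFinset u, (1 : ℝ) / G.degree u := by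
      rw [← Finset.sum_filter]
      apply Finset.sum_congr _ (fun _ _ => rfl)
      ext v
      simp only [Finset.mem_filter, SimpleGraph.mem_neighborFinset]
      exact ⟨fun h => h.2, fun h => ⟨hnb v h, h⟩⟩
    rw [this, Finset.sum_const, G.card_neighborFinset_eq_degree, nsmul_eq_mul]
    have : (G.degree u : ℝ) ≠ 0 := by exact_mod_cast (hNoIso u).ne'
    field_simp
  have hle : (U.card : ℝ) ≤ (M.card : ℝ) := by
    rw [hcount]
    calc ∑ v ∈ M, ∑ u ∈ U, (if G.Adj u v then (1 : ℝ) / G.degree u else 0)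
        ≤ ∑ v ∈ M, (1 : ℝ) := by
          apply Finset.sum_le_sum
          intro v hv
          have hv' := (hMmem v).1 hv
          have : ∑ u ∈ U, (if G.Adj u v then (1 : ℝ) / G.degree u else 0)
              = ∑ u ∈ (G.neighborFinset v).filter (fun u => ¬ isMarked G ID u),
                  (1 : ℝ) / G.degree u := by
            rw [← Finset.sum_filter]
            apply Finset.sum_congr _ (fun _ _ => rfl)
            ext u
            simp only [hU, Finset.mem_filter, Finset.mem_univ, true_and,
              SimpleGraph.mem_neighborFinset]
            exact ⟨fun h => ⟨h.2.symm, h.1⟩, fun h => ⟨h.2, h.1.symm⟩⟩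
          rw [this]
          exact part1 v hv'
      _ = (M.card : ℝ) := by simp
  exact_mod_cast hle
end

section
/- For every finite set N and every k ≥ 1, there exists a k-superimposed code of length l = 4(k+1)²·⌈log₂ |N|⌉ for N: an assignment of binary codewords of length l to the elements of N such that (1) every superimposition (bitwise OR) of at most k codewords is unique among such superimpositions, and (2) every superimposition of more than k codewords differs from every superimposition of at most k codewords. -/
open scoped Classical

/-- The superimposition (bitwise OR) of the codewords of a finite set `S`. -/
noncomputable def superimpose {N : Type*} {l : ℕ} (C : N → (Fin l → Bool)) (S : Finset N) :
    Fin l → Bool :=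
  fun i => S.sup (fun x => C x i)

private lemma bern_half (r : ℕ) (hr : 2 ≤ r) : ((1 - 1/(r:ℝ)))^r < 1/2 := by
  have hr2 : (2:ℝ) ≤ (r:ℝ) := by exact_mod_cast hr
  have hr1 : (1:ℝ) ≤ (r:ℝ) - 1 := by linarith
  set x : ℝ := 1/((r:ℝ)-1) with hxdef
  have hx : (0:ℝ) < x := by positivity
  have hB : (1:ℝ) + r * x ≤ (1+x)^r := one_add_mul_le_pow (by linarith) r
  have hrx : (1:ℝ) < r * x := by
    rw [hxdef, mul_one_div, lt_div_iff₀ (by linarith)]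
    linarith
  have h2 : (2:ℝ) < (1+x)^r := by linarith
  have hbase : (1 - 1/(r:ℝ)) = (1+x)⁻¹ := by
    rw [hxdef]
    field_simp
    ring
  rw [hbase, inv_pow]
  rw [one_div, inv_lt_inv₀ (by linarith) (by norm_num)]
  exact h2

private lemma succ_pow_lt_aux (k s : ℕ) (hk : 1 ≤ k) (hs : s ≤ k) :
    ((k:ℝ)+1)^s < 4 * (k:ℝ)^s := by
  have hk0 : (0:ℝ) < k := by exact_mod_cast hk
  have hbase : ((k:ℝ)+1) = k * (1 + 1/k) := by field_simp
  have h1 : (1 + 1/(k:ℝ))^s ≤ (1 + 1/(k:ℝ))^k := by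
    have h0 : (0:ℝ) ≤ 1/k := by positivity
    exact pow_le_pow_right₀ (by linarith) hs
  have h2 : (1 + 1/(k:ℝ))^k ≤ Real.exp (1/k) ^ k := by
    apply pow_le_pow_left₀ (by positivity)
    have := Real.add_one_le_exp (1/(k:ℝ))
    linarith
  have h3 : Real.exp (1/(k:ℝ)) ^ k = Real.exp 1 := by
    rw [← Real.exp_nat_mul]
    congr 1
    field_simp
  have h4 : Real.exp 1 < 4 := by
    have := Real.exp_one_lt_d9; norm_num at this ⊢; linarith
  calc ((k:ℝ)+1)^s = (k:ℝ)^s * (1+1/k)^s := by rw [hbase, mul_pow]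
    _ ≤ (k:ℝ)^s * Real.exp 1 := by
        apply mul_le_mul_of_nonneg_left _ (by positivity)
        rw [← h3]; exact h1.trans h2
    _ < 4 * (k:ℝ)^s := by nlinarith [pow_pos hk0 s]

/-- The per-coordinate constraint describing a "good column" for the pair `(x, S)`:
coordinate `x` is `0` and coordinates in `S` are nonzero. -/
private def colSet {N : Type*} [DecidableEq N] (k : ℕ) (x : N) (S : Finset N) (y : N) :
    Finset (Fin (k+1)) :=
  if y = x then {0} else if y ∈ S then Finset.univ.erase 0 else Finset.univ

private def goodCols {N : Type*} [DecidableEq N] [Fintype N] (k : ℕ) (x : N) (S : Finset N) :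
    Finset (N → Fin (k+1)) :=
  Fintype.piFinset (colSet k x S)

private lemma goodCols_card {N : Type*} [DecidableEq N] [Fintype N] (k : ℕ) (x : N)
    (S : Finset N) (hx : x ∉ S) (hS : S.card ≤ Fintype.card N - 1) :
    (goodCols k x S).card = k ^ S.card * (k+1) ^ (Fintype.card N - 1 - S.card) := by
  rw [goodCols, Fintype.card_piFinset]
  rw [← Finset.mul_prod_erase Finset.univ _ (Finset.mem_univ x)]
  have h1 : (colSet k x S x).card = 1 := by simp [colSet]
  rw [h1, one_mul]
  have hc : ∀ y ∈ Finset.univ.erase x,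
      (colSet k x S y).card = if y ∈ S then k else k+1 := by
    intro y hy
    rcases Finset.mem_erase.1 hy with ⟨hyx, -⟩
    by_cases hyS : y ∈ S
    · simp [colSet, hyx, hyS, Finset.card_erase_of_mem, Finset.card_univ]
    · simp [colSet, hyx, hyS, Finset.card_univ]
  rw [Finset.prod_congr rfl hc, Finset.prod_ite _ _]
  rw [Finset.prod_const, Finset.prod_const]
  have hfilter : (Finset.univ.erase x).filter (fun y => y ∈ S) = S := by
    ext y
    simp only [Finset.mem_filter, Finset.mem_erase, Finset.mem_univ, true_and]
    constructor
    · rintro ⟨-, h⟩; exact h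
    · intro h; exact ⟨⟨fun he => hx (he ▸ h), trivial⟩, h⟩
  have hSsub : S ⊆ Finset.univ.erase x := by
    intro y hy
    exact Finset.mem_erase.2 ⟨fun he => hx (he ▸ hy), Finset.mem_univ y⟩
  have herase : (Finset.univ.erase x).card = Fintype.card N - 1 := by
    rw [Finset.card_erase_of_mem (Finset.mem_univ x), Finset.card_univ]
  rw [Finset.filter_not, hfilter, Finset.card_sdiff_of_subset hSsub, herase]

private lemma exists_coverfree {N : Type*} [Fintype N] (k l κ : ℕ) (hk : 1 ≤ k)
    (hκk : κ ≤ k) (hκn : κ ≤ Fintype.card N - 1) (hn1 : 1 ≤ Fintype.card N)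
    (hl : (Fintype.card N : ℝ)^(k+1) *
        ((1 - 1/(4*((k:ℝ)+1))) * ((k:ℝ)+1)^(Fintype.card N))^l
        < (((k:ℝ)+1)^(Fintype.card N))^l) :
    ∃ C : N → Fin l → Bool, ∀ x : N, ∀ S : Finset N, x ∉ S → S.card ≤ κ →
      ∃ i, C x i = true ∧ ∀ y ∈ S, C y i = false := by
  classical
  set n := Fintype.card N with hn
  have hq0 : (0:ℝ) ≤ 1 - 1/(4*((k:ℝ)+1)) := by
    have hk0 : (0:ℝ) ≤ k := Nat.cast_nonneg k
    have h1 : 1/(4*((k:ℝ)+1)) ≤ 1 := by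
      rw [div_le_one (by positivity)]
      linarith
    linarith
  -- real upper bound on the number of bad columns
  have hbadcol : ∀ x : N, ∀ S : Finset N, x ∉ S → S.card ≤ κ →
      (((Finset.univ \ goodCols k x S).card : ℝ))
        ≤ (1 - 1/(4*((k:ℝ)+1))) * ((k:ℝ)+1)^n := by
    intro x S hx hS
    have hs1 : S.card ≤ n - 1 := le_trans hS hκn
    have hsk : S.card ≤ k := le_trans hS hκk
    have hsub : goodCols k x S ⊆ Finset.univ := Finset.subset_univ _
    have hcardV : (Finset.univ : Finset (N → Fin (k+1))).card = (k+1)^n := by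
      rw [Finset.card_univ, Fintype.card_fun, Fintype.card_fin]
    rw [Finset.card_sdiff_of_subset hsub, hcardV]
    rw [Nat.cast_sub (by rw [← hcardV]; exact Finset.card_le_card hsub)]
    have hg := goodCols_card k x S hx hs1
    rw [← hn] at hg
    have e1 : ((k:ℝ)+1)^(n-1) = ((k:ℝ)+1)^(S.card) * ((k:ℝ)+1)^(n-1-S.card) := by
      rw [← pow_add, Nat.add_sub_cancel' hs1]
    have e2 : ((k:ℝ)+1)^n = ((k:ℝ)+1)^(n-1) * ((k:ℝ)+1) := by
      rw [← pow_succ, Nat.sub_add_cancel hn1]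
    have hG4 : ((k:ℝ)+1)^(n-1) ≤ 4 * ((goodCols k x S).card : ℝ) := by
      rw [hg]
      push_cast
      rw [e1]
      have hlt := (succ_pow_lt_aux k S.card hk hsk).le
      have hpos : (0:ℝ) ≤ ((k:ℝ)+1)^(n-1-S.card) := by positivity
      calc ((k:ℝ)+1)^(S.card) * ((k:ℝ)+1)^(n-1-S.card)
          ≤ (4 * (k:ℝ)^S.card) * ((k:ℝ)+1)^(n-1-S.card) :=
            mul_le_mul_of_nonneg_right hlt hpos
        _ = 4 * ((k:ℝ)^S.card * ((k:ℝ)+1)^(n-1-S.card)) := by ring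
    have hfrac : (1/(4*((k:ℝ)+1))) * ((k:ℝ)+1)^n = ((k:ℝ)+1)^(n-1)/4 := by
      rw [e2]
      have : ((k:ℝ)+1) ≠ 0 := by positivity
      field_simp
    have hcast : ((((k+1):ℕ)^n : ℕ) : ℝ) = ((k:ℝ)+1)^n := by push_cast; ring
    rw [hcast]
    have hrhs : (1 - 1/(4*((k:ℝ)+1))) * ((k:ℝ)+1)^n
        = ((k:ℝ)+1)^n - ((k:ℝ)+1)^(n-1)/4 := by
      rw [sub_mul, one_mul, hfrac]
    rw [hrhs]
    linarith [hG4]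
  -- bound on the number of pairs
  set P : Finset (N × Finset N) :=
    Finset.univ.filter (fun p => p.1 ∉ p.2 ∧ p.2.card ≤ κ) with hP
  have hchar : ∀ (x : N) (S : Finset N), x ∉ S → S.card ≤ k →
      ∀ y, y ∈ S ↔ (y ≠ x ∧ ∃ i : Fin k, S.toList.getD i x = y) := by
    intro x S hx hS y
    constructor
    · intro hy
      refine ⟨fun h => hx (h ▸ hy), ?_⟩
      have hy' : y ∈ S.toList := Finset.mem_toList.2 hy
      obtain ⟨j, hj, hjy⟩ := List.mem_iff_getElem.1 hy'
      have hj' : j < S.card := by rwa [Finset.length_toList] at hj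
      have hjk : j < k := lt_of_lt_of_le hj' hS
      refine ⟨⟨j, hjk⟩, ?_⟩
      rw [List.getD_eq_getElem _ _ (by simpa [Finset.length_toList] using hj')]
      exact hjy
    · rintro ⟨hyx, i, hi⟩
      by_cases hlt : (i:ℕ) < S.toList.length
      · rw [List.getD_eq_getElem _ _ hlt] at hi
        rw [← hi]
        exact Finset.mem_toList.1 (List.getElem_mem hlt)
      · rw [List.getD_eq_default _ _ (le_of_not_gt hlt)] at hi
        exact absurd hi hyx.symm
  have hPcard : P.card ≤ n ^ (k+1) := by
    have hinj : P.card ≤ Fintype.card (N × (Fin k → N)) := by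
      rw [← Finset.card_univ]
      apply Finset.card_le_card_of_injOn
        (fun p => (p.1, fun i : Fin k => p.2.toList.getD i p.1))
      · intro p _; exact Finset.mem_univ _
      · intro p hp q hq hpq
        rw [Finset.mem_coe, hP, Finset.mem_filter] at hp hq
        obtain ⟨-, hp1, hp2⟩ := hp
        obtain ⟨-, hq1, hq2⟩ := hq
        simp only [Prod.mk.injEq] at hpq
        obtain ⟨h1, h2⟩ := hpq
        rw [h1] at h2
        have h3 : p.2 = q.2 := by
          ext y
          rw [hchar p.1 p.2 hp1 (hp2.trans hκk) y, hchar q.1 q.2 hq1 (hq2.trans hκk) y, h1]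
          constructor
          · rintro ⟨hyx, i, hi⟩
            exact ⟨hyx, i, by rw [← congrFun h2 i]; exact hi⟩
          · rintro ⟨hyx, i, hi⟩
            exact ⟨hyx, i, by rw [congrFun h2 i]; exact hi⟩
        exact Prod.ext h1 h3
    calc P.card ≤ Fintype.card (N × (Fin k → N)) := hinj
      _ = n * n ^ k := by
          rw [Fintype.card_prod, Fintype.card_fun, Fintype.card_fin, ← hn]
      _ = n ^ (k+1) := by ring
  -- the union of bad events
  set Bad : Finset (Fin l → N → Fin (k+1)) :=
    P.biUnion (fun p => Fintype.piFinset (fun _ : Fin l => Finset.univ \ goodCols k p.1 p.2))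
    with hBad
  have hBadlt : Bad.card < Fintype.card (Fin l → N → Fin (k+1)) := by
    rw [← Nat.cast_lt (α := ℝ)]
    have hcardΩ : (Fintype.card (Fin l → N → Fin (k+1)) : ℝ) = (((k:ℝ)+1)^n)^l := by
      rw [Fintype.card_fun, Fintype.card_fun, Fintype.card_fin, Fintype.card_fin, ← hn]
      push_cast
      ring
    rw [hcardΩ]
    have step1 : (Bad.card : ℝ) ≤
        ∑ p ∈ P, ((Fintype.piFinset
          (fun _ : Fin l => Finset.univ \ goodCols k p.1 p.2)).card : ℝ) := by
      rw [hBad]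
      exact_mod_cast Finset.card_biUnion_le
    have step2 : ∀ p ∈ P,
        ((Fintype.piFinset (fun _ : Fin l => Finset.univ \ goodCols k p.1 p.2)).card : ℝ)
          ≤ ((1 - 1/(4*((k:ℝ)+1))) * ((k:ℝ)+1)^n)^l := by
      intro p hp
      rw [hP, Finset.mem_filter] at hp
      obtain ⟨-, hp1, hp2⟩ := hp
      have : (Fintype.piFinset (fun _ : Fin l => Finset.univ \ goodCols k p.1 p.2)).card
          = ((Finset.univ \ goodCols k p.1 p.2).card)^l := by
        rw [Fintype.card_piFinset, Finset.prod_const, Finset.card_univ, Fintype.card_fin]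
      rw [this]
      push_cast
      exact pow_le_pow_left₀ (by positivity) (hbadcol p.1 p.2 hp1 hp2) l
    calc (Bad.card : ℝ)
        ≤ ∑ p ∈ P, ((Fintype.piFinset
            (fun _ : Fin l => Finset.univ \ goodCols k p.1 p.2)).card : ℝ) := step1
      _ ≤ ∑ _p ∈ P, ((1 - 1/(4*((k:ℝ)+1))) * ((k:ℝ)+1)^n)^l :=
          Finset.sum_le_sum step2
      _ = P.card * ((1 - 1/(4*((k:ℝ)+1))) * ((k:ℝ)+1)^n)^l := by
          rw [Finset.sum_const, nsmul_eq_mul]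
      _ ≤ (n:ℝ)^(k+1) * ((1 - 1/(4*((k:ℝ)+1))) * ((k:ℝ)+1)^n)^l := by
          apply mul_le_mul_of_nonneg_right _ (by positivity)
          exact_mod_cast hPcard
      _ < (((k:ℝ)+1)^n)^l := hl
  obtain ⟨ω, hω⟩ : ∃ ω, ω ∉ Bad := by
    by_contra h
    push_neg at h
    have : Bad = Finset.univ := Finset.eq_univ_iff_forall.2 h
    rw [this, Finset.card_univ] at hBadlt
    exact lt_irrefl _ hBadlt
  refine ⟨fun x i => decide (ω i x = 0), ?_⟩
  intro x S hx hS
  have hPmem : (x, S) ∈ P := by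
    rw [hP, Finset.mem_filter]
    exact ⟨Finset.mem_univ _, hx, hS⟩
  have hnot : ω ∉ Fintype.piFinset (fun _ : Fin l => Finset.univ \ goodCols k x S) := by
    intro hmem
    exact hω (Finset.mem_biUnion.2 ⟨(x,S), hPmem, hmem⟩)
  rw [Fintype.mem_piFinset] at hnot
  push_neg at hnot
  obtain ⟨i, hi⟩ := hnot
  have hiG : ω i ∈ goodCols k x S := by
    by_contra h
    exact hi (Finset.mem_sdiff.2 ⟨Finset.mem_univ _, h⟩)
  rw [goodCols, Fintype.mem_piFinset] at hiG
  refine ⟨i, ?_, ?_⟩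
  · have hgx := hiG x
    simp [colSet] at hgx
    simp [hgx]
  · intro y hy
    have hgy := hiG y
    have hyx : y ≠ x := fun h => hx (h ▸ hy)
    simp [colSet, hyx, hy] at hgy
    simp [hgy]

/-- Existence of a `k`-superimposed code of length `l = 4(k+1)² ⌈log₂ |N|⌉`:
superimpositions of at most `k` codewords are pairwise distinct, and differ from
every superimposition of more than `k` codewords. -/
theorem exists_superimposed_code (N : Type*) [Fintype N] (hN : 2 ≤ Fintype.card N)
    (k : ℕ) (hk : 1 ≤ k) :
    ∃ C : N → (Fin (4 * (k + 1) ^ 2 * Nat.clog 2 (Fintype.card N)) → Bool),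
      (∀ S S' : Finset N, S.card ≤ k → S'.card ≤ k → S ≠ S' →
        superimpose C S ≠ superimpose C S') ∧
      (∀ S S' : Finset N, S.card ≤ k → k < S'.card →
        superimpose C S ≠ superimpose C S') := by
  classical
  have hn1 : 1 ≤ Fintype.card N := le_trans (by norm_num) hN
  set n := Fintype.card N with hn
  have hm : 1 ≤ Nat.clog 2 n := Nat.clog_pos one_lt_two hN
  set m := Nat.clog 2 n with hmdef
  set L := 4 * (k + 1) ^ 2 * m with hL
  set κ := min k (n-1) with hκ
  -- the numeric inequality
  have hq0 : (0:ℝ) ≤ 1 - 1/(4*((k:ℝ)+1)) := by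
    have hk0 : (0:ℝ) ≤ k := Nat.cast_nonneg k
    have h1 : 1/(4*((k:ℝ)+1)) ≤ 1 := by
      rw [div_le_one (by positivity)]
      linarith
    linarith
  have key : (n:ℝ)^(k+1) * (1 - 1/(4*((k:ℝ)+1)))^L < 1 := by
    have hL' : L = (4*(k+1)) * ((k+1)*m) := by rw [hL]; ring
    have hb : (1 - 1/(4*((k:ℝ)+1)))^(4*(k+1)) < 1/2 := by
      have := bern_half (4*(k+1)) (by omega)
      have hcast : ((4*(k+1):ℕ):ℝ) = 4*((k:ℝ)+1) := by push_cast; ring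
      rwa [hcast] at this
    have hexp : (k+1)*m ≠ 0 := by positivity
    have hpow : (1 - 1/(4*((k:ℝ)+1)))^L < (1/2)^((k+1)*m) := by
      rw [hL', pow_mul]
      exact pow_lt_pow_left₀ hb (by positivity) hexp
    have hnle : (n:ℝ)^(k+1) ≤ ((2:ℝ)^m)^(k+1) := by
      apply pow_le_pow_left₀ (Nat.cast_nonneg n)
      have := Nat.le_pow_clog one_lt_two n
      rw [← hmdef] at this
      exact_mod_cast this
    have hfinal : ((2:ℝ)^m)^(k+1) * (1/2)^((k+1)*m) = 1 := by
      rw [← pow_mul, one_div, inv_pow, mul_comm m (k+1)]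
      field_simp
    calc (n:ℝ)^(k+1) * (1 - 1/(4*((k:ℝ)+1)))^L
        < (n:ℝ)^(k+1) * (1/2)^((k+1)*m) := by
          apply mul_lt_mul_of_pos_left hpow
          have : (0:ℝ) < n := by exact_mod_cast hn1
          positivity
      _ ≤ ((2:ℝ)^m)^(k+1) * (1/2)^((k+1)*m) :=
          mul_le_mul_of_nonneg_right hnle (by positivity)
      _ = 1 := hfinal
  have hl : (n : ℝ)^(k+1) * ((1 - 1/(4*((k:ℝ)+1))) * ((k:ℝ)+1)^n)^L
      < (((k:ℝ)+1)^n)^L := by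
    rw [mul_pow]
    have hA : (0:ℝ) < (((k:ℝ)+1)^n)^L := by positivity
    calc (n:ℝ)^(k+1) * ((1 - 1/(4*((k:ℝ)+1)))^L * (((k:ℝ)+1)^n)^L)
        = ((n:ℝ)^(k+1) * (1 - 1/(4*((k:ℝ)+1)))^L) * (((k:ℝ)+1)^n)^L := by ring
      _ < 1 * (((k:ℝ)+1)^n)^L := mul_lt_mul_of_pos_right key hA
      _ = (((k:ℝ)+1)^n)^L := one_mul _
  obtain ⟨C, hC⟩ := exists_coverfree (N := N) k L κ hk (min_le_left _ _)
    (min_le_right _ _) hn1 hl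
  have keyne : ∀ (S S' : Finset N) (x : N), x ∈ S → x ∉ S' → S'.card ≤ k →
      superimpose C S ≠ superimpose C S' := by
    intro S S' x hxS hxS' hS'k hEq
    have hcard : S'.card ≤ κ := by
      rw [hκ]
      refine le_min hS'k ?_
      have hsub : S' ⊆ Finset.univ.erase x := fun y hy =>
        Finset.mem_erase.2 ⟨fun h => hxS' (h ▸ hy), Finset.mem_univ y⟩
      calc S'.card ≤ (Finset.univ.erase x).card := Finset.card_le_card hsub
        _ = n - 1 := by rw [Finset.card_erase_of_mem (Finset.mem_univ x), Finset.card_univ]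
    obtain ⟨i, hxi, hSi⟩ := hC x S' hxS' hcard
    have h1 : superimpose C S i = true := by
      show S.sup (fun y => C y i) = true
      have hle : C x i ≤ S.sup (fun y => C y i) :=
        Finset.le_sup (f := fun y => C y i) hxS
      rw [hxi] at hle
      exact le_antisymm (Bool.le_true _) hle
    have h2 : superimpose C S' i = false := by
      show S'.sup (fun y => C y i) = false
      exact (Finset.sup_eq_bot_iff _ _).2 hSi
    have := congrFun hEq i
    rw [h1, h2] at this
    simp at this
  refine ⟨C, ?_, ?_⟩
  · intro S S' hS hS' hne
    by_cases hsub : S ⊆ S'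
    · have hns : ¬ S' ⊆ S := fun h => hne (Finset.Subset.antisymm hsub h)
      obtain ⟨x, hxS', hxS⟩ := Finset.not_subset.1 hns
      exact (keyne S' S x hxS' hxS hS).symm
    · obtain ⟨x, hxS, hxS'⟩ := Finset.not_subset.1 hsub
      exact keyne S S' x hxS hxS' hS'
  · intro S S' hS hS'
    have hns : ¬ S' ⊆ S := fun h => absurd (Finset.card_le_card h) (by omega)
    obtain ⟨x, hxS', hxS⟩ := Finset.not_subset.1 hns
    exact (keyne S' S x hxS' hxS hS).symm
end

section
/- Suppose a potential argument assigns each of n nodes one unit of potential, passed to the nearest candidate (ties broken arbitrarily). If a candidate u has no other candidate within distance 4n/k (where k is the number of candidates), then u receives potential at least 2n/k, and therefore the number of such candidates is at most k/2. -/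
open scoped Classical
open SimpleGraph

lemma walk_to_getVert {V : Type*} {G : SimpleGraph V} {u w : V} (p : G.Walk u w) (i : ℕ) :
    ∃ q : G.Walk u (p.getVert i), q.length ≤ i := by
  induction p generalizing i with
  | nil => exact ⟨.nil, by simp⟩
  | cons h p ih =>
    cases i with
    | zero => exact ⟨.nil, rfl.le⟩
    | succ i =>
      obtain ⟨q, hq⟩ := ih i
      exact ⟨.cons h q, by simpa using Nat.succ_le_succ hq⟩

lemma walk_from_getVert {V : Type*} {G : SimpleGraph V} {u w : V} (p : G.Walk u w) (i : ℕ) :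
    ∃ q : G.Walk (p.getVert i) w, q.length ≤ p.length - i := by
  induction p generalizing i with
  | nil => exact ⟨.nil, by simp⟩
  | cons h p ih =>
    cases i with
    | zero => exact ⟨.cons h p, le_rfl⟩
    | succ i =>
      obtain ⟨q, hq⟩ := ih i
      exact ⟨q, by simpa using hq.trans (by omega)⟩

lemma dist_getVert {V : Type*} {G : SimpleGraph V} (hG : G.Connected) {u w : V}
    (p : G.Walk u w) (hp : p.length = G.dist u w) {i : ℕ} (hi : i ≤ p.length) :
    G.dist u (p.getVert i) = i := by
  obtain ⟨q1, hq1⟩ := walk_to_getVert p i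
  obtain ⟨q2, hq2⟩ := walk_from_getVert p i
  have h1 : G.dist u (p.getVert i) ≤ i := le_trans (SimpleGraph.dist_le q1) hq1
  have h2 : G.dist (p.getVert i) w ≤ p.length - i := le_trans (SimpleGraph.dist_le q2) hq2
  have h3 := hG.dist_triangle (u := u) (v := p.getVert i) (w := w)
  omega

lemma ball_card {V : Type*} [Fintype V] {G : SimpleGraph V} (hG : G.Connected)
    (u : V) (r : ℕ) :
    min (r + 1) (Fintype.card V) ≤ (Finset.univ.filter fun v => G.dist u v ≤ r).card := by
  by_cases hw : ∃ w, r ≤ G.dist u w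
  · obtain ⟨w, hw⟩ := hw
    obtain ⟨p, hp⟩ := (hG u w).exists_walk_length_eq_dist
    have hlen : r ≤ p.length := by omega
    have hinj : Set.InjOn p.getVert (Finset.range (r + 1)) := by
      intro i hi j hj hij
      simp only [Finset.coe_range, Set.mem_Iio] at hi hj
      have e1 := dist_getVert hG p hp (i := i) (by omega)
      have e2 := dist_getVert hG p hp (i := j) (by omega)
      rw [hij] at e1
      omega
    have hsub : (Finset.range (r + 1)).image p.getVert ⊆
        Finset.univ.filter fun v => G.dist u v ≤ r := by
      intro x hx
      simp only [Finset.mem_image, Finset.mem_range] at hx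
      obtain ⟨i, hi, rfl⟩ := hx
      simp only [Finset.mem_filter, Finset.mem_univ, true_and]
      rw [dist_getVert hG p hp (by omega)]; omega
    calc min (r + 1) (Fintype.card V) ≤ r + 1 := min_le_left _ _
      _ = ((Finset.range (r + 1)).image p.getVert).card := by
          rw [Finset.card_image_of_injOn hinj, Finset.card_range]
      _ ≤ _ := Finset.card_le_card hsub
  · push_neg at hw
    have : (Finset.univ.filter fun v => G.dist u v ≤ r) = Finset.univ := by
      apply Finset.filter_true_of_mem
      intro v _
      exact (hw v).le
    rw [this, Finset.card_univ]
    exact min_le_right _ _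

/-- Potential argument: each of the `n` vertices passes one unit of potential to a
nearest candidate `f v`. A candidate with no other candidate within distance `4n/k`
receives potential at least `2n/k`, hence at most `k/2` candidates are that isolated. -/
theorem potential_argument {V : Type*} [Fintype V]
    (G : SimpleGraph V) (hG : G.Connected) (C : Finset V) (k : ℕ)
    (hk : C.card = k) (hk2 : 2 ≤ k)
    (f : V → V) (hfC : ∀ v, f v ∈ C)
    (hnear : ∀ v, ∀ c ∈ C, G.dist v (f v) ≤ G.dist v c) :
    (∀ u ∈ C,
        (∀ v ∈ C, v ≠ u → 4 * (Fintype.card V : ℝ) / k < G.dist u v) →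
        2 * (Fintype.card V : ℝ) / k ≤
          (Finset.univ.filter fun v => f v = u).card) ∧
    2 * (C.filter fun u => ∀ v ∈ C, v ≠ u →
          4 * (Fintype.card V : ℝ) / k < G.dist u v).card ≤ k := by
  set n := Fintype.card V with hn
  have hkn : k ≤ n := hk ▸ Finset.card_le_univ C
  have hk0 : (0 : ℝ) < k := by exact_mod_cast Nat.lt_of_lt_of_le Nat.zero_lt_two hk2
  have hn0 : (0 : ℝ) < n := by
    have : 0 < n := lt_of_lt_of_le (Nat.lt_of_lt_of_le Nat.zero_lt_two hk2) hkn
    exact_mod_cast this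
  have main : ∀ u ∈ C,
      (∀ v ∈ C, v ≠ u → 4 * (n : ℝ) / k < G.dist u v) →
      2 * (n : ℝ) / k ≤ (Finset.univ.filter fun v => f v = u).card := by
    intro u hu hiso
    set r := 2 * n / k with hr
    have hrle : (r : ℝ) ≤ 2 * n / k := by
      calc (r : ℝ) ≤ ((2 * n : ℕ) : ℝ) / (k : ℝ) := Nat.cast_div_le
        _ = 2 * (n : ℝ) / k := by push_cast; ring
    have hfv : ∀ v, G.dist u v ≤ r → f v = u := by
      intro v hv
      by_contra hne
      have h1 : G.dist v (f v) ≤ G.dist v u := hnear v u hu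
      have h2 : G.dist u (f v) ≤ G.dist u v + G.dist v (f v) := hG.dist_triangle
      have h3 : 4 * (n : ℝ) / k < G.dist u (f v) := hiso (f v) (hfC v) hne
      have h1' : G.dist v u = G.dist u v := SimpleGraph.dist_comm
      have h4 : G.dist u (f v) ≤ 2 * r := by omega
      have h5 : (G.dist u (f v) : ℝ) ≤ 2 * r := by exact_mod_cast h4
      have h6 : 4 * (n : ℝ) / k = 2 * (2 * (n : ℝ) / k) := by ring
      linarith
    have hsub : (Finset.univ.filter fun v => G.dist u v ≤ r) ⊆
        (Finset.univ.filter fun v => f v = u) := by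
      intro v hv
      simp only [Finset.mem_filter, Finset.mem_univ, true_and] at hv ⊢
      exact hfv v hv
    have hball := ball_card hG u r
    have hcard : min (r + 1) n ≤ (Finset.univ.filter fun v => f v = u).card :=
      le_trans hball (Finset.card_le_card hsub)
    rcases le_total (r + 1) n with hmin | hmin
    · have hlt : 2 * (n : ℝ) / k < r + 1 := by
        have h := Nat.lt_floor_add_one (((2 * n : ℕ) : ℝ) / (k : ℕ))
        rw [Nat.floor_div_natCast, Nat.floor_natCast] at h
        push_cast at h
        push_cast [hr]
        linarith
      rw [min_eq_left hmin] at hcard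
      have h8 : (r : ℝ) + 1 ≤ (Finset.univ.filter fun v => f v = u).card := by
        exact_mod_cast hcard
      linarith
    · have hle : 2 * (n : ℝ) / k ≤ n := by
        rw [div_le_iff₀ hk0]
        have : (2 : ℝ) ≤ k := by exact_mod_cast hk2
        nlinarith
      rw [min_eq_right hmin] at hcard
      have h8 : (n : ℝ) ≤ (Finset.univ.filter fun v => f v = u).card := by
        exact_mod_cast hcard
      linarith
  refine ⟨main, ?_⟩
  set T := C.filter fun u => ∀ v ∈ C, v ≠ u → 4 * (n : ℝ) / k < G.dist u v with hT
  have hfibers : ∀ u ∈ T, 2 * (n : ℝ) / k ≤ (Finset.univ.filter fun v => f v = u).card := by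
    intro u hu
    rw [hT, Finset.mem_filter] at hu
    exact main u hu.1 hu.2
  have hdisj : (T : Set V).PairwiseDisjoint fun u => Finset.univ.filter fun v => f v = u := by
    intro a _ b _ hab
    apply Finset.disjoint_filter_filter'
    exact Set.disjoint_left.mpr fun v hva hvb => hab (hva ▸ hvb ▸ rfl)
  have hsum : ∑ u ∈ T, (Finset.univ.filter fun v => f v = u).card ≤ n := by
    rw [← Finset.card_biUnion fun a ha b hb hab => hdisj ha hb hab]
    exact (Finset.card_le_univ _)
  have hsumR : ∑ u ∈ T, ((Finset.univ.filter fun v => f v = u).card : ℝ) ≤ n := by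
    exact_mod_cast hsum
  have hTbound : (T.card : ℝ) * (2 * (n : ℝ) / k) ≤ n := by
    calc (T.card : ℝ) * (2 * (n : ℝ) / k)
        = T.card • (2 * (n : ℝ) / k) := by rw [nsmul_eq_mul]
      _ ≤ ∑ u ∈ T, ((Finset.univ.filter fun v => f v = u).card : ℝ) :=
          Finset.card_nsmul_le_sum T _ _ hfibers
      _ ≤ n := hsumR
  have hfin : 2 * (T.card : ℝ) ≤ k := by
    rw [mul_div_assoc'] at hTbound
    have h1 : (T.card : ℝ) * (2 * n) ≤ n * k := by
      have := (div_le_iff₀ hk0).mp hTbound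
      linarith
    nlinarith [h1, hn0]
  exact_mod_cast hfin
end
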